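/- Suppose all coordinates of μ ∈ ℝ^V equal a common value μ̄ ∈ ℝ, so that ξ_u(μ) = λ(1{u ∈ N_c} + μ̄·d_u) for all u ∈ V. Then for every v ∈ V, the gradient of the permutation-averaged BFS loss satisfies ∂L^BFS/∂μ_v (μ) = −(exp(−ξ_+(μ))/(n√K)) · ((n − |N_{c+1}|)/(exp(ξ_+(μ)) + n − |N_{c+1}|)) · Σ_{u ∈ V} d_u·exp(ξ_u(μ)); in particular this value is the same for every v ∈ V. -/

import Mathlib

open Finset Filter Matrix

variable {V : Type*}

/-- `ball E r j` : set of vertices reachable from `r` within `j` steps along edges in `E`. -/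
def ball [Fintype V] [DecidableEq V] (E : Finset (V × V)) (r : V) : ℕ → Finset V
  | 0 => {r}
  | j + 1 => Finset.univ.filter fun v => v ∈ ball E r j ∨ ∃ u ∈ ball E r j, (u, v) ∈ E

/-- in-degree of `v` restricted to sources in `N_c`. -/
def degc [Fintype V] [DecidableEq V] (E : Finset (V × V)) (r : V) (c : ℕ) (v : V) : ℕ :=
  ((ball E r c).filter fun u => (u, v) ∈ E).card

/-- λ = 1/√K with K = |N_c|. -/
noncomputable def lamc [Fintype V] [DecidableEq V] (E : Finset (V × V)) (r : V) (c : ℕ) : ℝ :=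
  1 / Real.sqrt ((ball E r c).card : ℝ)

/-- the logit ξ_v(μ). -/
noncomputable def xi [Fintype V] [DecidableEq V] (E : Finset (V × V)) (r : V) (c : ℕ)
    (μ : V → ℝ) (v : V) : ℝ :=
  lamc E r c * (if v ∈ ball E r c then 1 else 0)
    + lamc E r c * ∑ u ∈ (ball E r c).filter (fun u => (u, v) ∈ E), μ u

/-- BFS loss. -/
noncomputable def bfsLoss [Fintype V] [DecidableEq V] (E : Finset (V × V)) (r : V) (c : ℕ)
    (μ : V → ℝ) : ℝ :=
  - Real.log ((∑ v ∈ ball E r (c + 1), Real.exp (xi E r c μ v)) /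
      ∑ v : V, Real.exp (xi E r c μ v))

/-- edge set of the permuted instance. -/
def permE [Fintype V] [DecidableEq V] (π : Equiv.Perm V) (E : Finset (V × V)) :
    Finset (V × V) :=
  E.image fun e => (π e.1, π e.2)

/-- permutation-averaged BFS loss. -/
noncomputable def avgBfsLoss [Fintype V] [DecidableEq V] (E : Finset (V × V)) (r : V) (c : ℕ)
    (μ : V → ℝ) : ℝ :=
  ((Nat.factorial (Fintype.card V) : ℝ))⁻¹ *
    ∑ π : Equiv.Perm V, bfsLoss (permE π E) (π r) c μ

/-- coconut loss with target `p`. -/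
noncomputable def cocoLoss [Fintype V] [DecidableEq V] (E : Finset (V × V)) (r : V) (c : ℕ)
    (p : V) (μ : V → ℝ) : ℝ :=
  - Real.log (Real.exp (xi E r c μ p) / ∑ v : V, Real.exp (xi E r c μ v))

/-- permutation-averaged coconut loss. -/
noncomputable def avgCocoLoss [Fintype V] [DecidableEq V] (E : Finset (V × V)) (r : V) (c : ℕ)
    (p : V) (μ : V → ℝ) : ℝ :=
  ((Nat.factorial (Fintype.card V) : ℝ))⁻¹ *
    ∑ π : Equiv.Perm V, cocoLoss (permE π E) (π r) c (π p) μ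

/-- the scalar function F. -/
noncomputable def Fc [Fintype V] [DecidableEq V] (E : Finset (V × V)) (r : V) (c : ℕ)
    (x : ℝ) : ℝ :=
  (∑ u ∈ ball E r (c + 1), (degc E r c u : ℝ) *
      Real.exp (lamc E r c * ((if u ∈ ball E r c then 1 else 0) + x * (degc E r c u : ℝ))))
    / ((∑ u ∈ ball E r (c + 1),
        Real.exp (lamc E r c * ((if u ∈ ball E r c then 1 else 0) + x * (degc E r c u : ℝ))))
      + ((Fintype.card V : ℝ) - ((ball E r (c + 1)).card : ℝ)))

section Aux
variable {V : Type*} [Fintype V] [DecidableEq V]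

lemma mem_permE (π : Equiv.Perm V) (E : Finset (V × V)) (a b : V) :
    (π a, π b) ∈ permE π E ↔ (a, b) ∈ E := by
  constructor
  · intro h
    simp only [permE, Finset.mem_image] at h
    obtain ⟨e, he, h1⟩ := h
    obtain ⟨h1, h2⟩ := Prod.mk.injEq _ _ _ _ ▸ h1
    rwa [show a = e.1 from π.injective h1.symm, show b = e.2 from π.injective h2.symm]
  · intro h
    simp only [permE, Finset.mem_image]
    exact ⟨(a, b), h, rfl⟩

lemma ball_perm (π : Equiv.Perm V) (E : Finset (V × V)) (r : V) (j : ℕ) :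
    ball (permE π E) (π r) j = (ball E r j).image π := by
  induction j with
  | zero => simp [ball]
  | succ j ih =>
    ext w
    simp only [ball, Finset.mem_filter, Finset.mem_univ, true_and, ih, Finset.mem_image]
    constructor
    · rintro (⟨u, hu, rfl⟩ | ⟨x, ⟨u, hu, rfl⟩, hx⟩)
      · exact ⟨u, Or.inl hu, rfl⟩
      · obtain ⟨w', rfl⟩ := π.surjective w
        rw [mem_permE] at hx
        exact ⟨w', Or.inr ⟨u, hu, hx⟩, rfl⟩
    · rintro ⟨w', (hw' | ⟨u, hu, hx⟩), rfl⟩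
      · exact Or.inl ⟨w', hw', rfl⟩
      · exact Or.inr ⟨π u, ⟨u, hu, rfl⟩, (mem_permE π E u w').2 hx⟩

lemma ball_subset_succ (E : Finset (V × V)) (r : V) (j : ℕ) :
    ball E r j ⊆ ball E r (j + 1) := by
  intro x hx
  simp only [ball, Finset.mem_filter, Finset.mem_univ, true_and]
  exact Or.inl hx

lemma root_mem_ball (E : Finset (V × V)) (r : V) (j : ℕ) : r ∈ ball E r j := by
  induction j with
  | zero => simp [ball]
  | succ j ih => exact ball_subset_succ E r j ih

lemma mem_ball_succ_of_edge {E : Finset (V × V)} {r : V} {c : ℕ} {u w : V}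
    (hu : u ∈ ball E r c) (hw : (u, w) ∈ E) : w ∈ ball E r (c + 1) := by
  simp only [ball, Finset.mem_filter, Finset.mem_univ, true_and]
  exact Or.inr ⟨u, hu, hw⟩

lemma xi_zero {E : Finset (V × V)} {r : V} {c : ℕ} (μ : V → ℝ) {w : V}
    (hw : w ∉ ball E r (c + 1)) : xi E r c μ w = 0 := by
  have h1 : w ∉ ball E r c := fun h => hw (ball_subset_succ E r c h)
  have h2 : (ball E r c).filter (fun u => (u, w) ∈ E) = ∅ := by
    rw [Finset.filter_eq_empty_iff]
    exact fun u hu hw' => hw (mem_ball_succ_of_edge hu hw')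
  simp [xi, h1, h2]

lemma perm_fiber_card (u v : V) :
    (Finset.univ.filter fun π : Equiv.Perm V => π u = v).card
      = Nat.factorial (Fintype.card V - 1) := by
  have hconst : ∀ v' : V,
      (Finset.univ.filter fun π : Equiv.Perm V => π u = v').card
        = (Finset.univ.filter fun π : Equiv.Perm V => π u = v).card := by
    intro v'
    apply Finset.card_bij' (fun π _ => Equiv.swap v' v * π) (fun π _ => Equiv.swap v' v * π)
    · intro π hπ
      simp only [Finset.mem_filter, Finset.mem_univ, true_and] at hπ ⊢
      simp [hπ, Equiv.swap_apply_left]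
    · intro π hπ
      simp only [Finset.mem_filter, Finset.mem_univ, true_and] at hπ ⊢
      simp [hπ, Equiv.swap_apply_right]
    · intro π _; simp [← mul_assoc]
    · intro π _; simp [← mul_assoc]
  have hsum : ∑ v' : V, (Finset.univ.filter fun π : Equiv.Perm V => π u = v').card
      = Fintype.card (Equiv.Perm V) := by
    rw [← Finset.card_univ]
    exact (Finset.card_eq_sum_card_fiberwise (fun π _ => Finset.mem_univ (π u))).symm
  have hn : 0 < Fintype.card V := Fintype.card_pos_iff.mpr ⟨u⟩
  have : Fintype.card V * (Finset.univ.filter fun π : Equiv.Perm V => π u = v).card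
      = Fintype.card V * Nat.factorial (Fintype.card V - 1) := by
    calc Fintype.card V * (Finset.univ.filter fun π : Equiv.Perm V => π u = v).card
        = ∑ v' : V, (Finset.univ.filter fun π : Equiv.Perm V => π u = v').card := by
          rw [Finset.sum_congr rfl (fun v' _ => hconst v'), Finset.sum_const, Finset.card_univ,
            smul_eq_mul]
      _ = Fintype.card (Equiv.Perm V) := hsum
      _ = Nat.factorial (Fintype.card V) := Fintype.card_perm
      _ = Fintype.card V * Nat.factorial (Fintype.card V - 1) :=
          (Nat.mul_factorial_pred hn.ne').symm
  exact Nat.eq_of_mul_eq_mul_left hn this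

end Aux
section Aux2
variable {V : Type*} [Fintype V] [DecidableEq V]

lemma lamc_perm (π : Equiv.Perm V) (E : Finset (V × V)) (r : V) (c : ℕ) :
    lamc (permE π E) (π r) c = lamc E r c := by
  rw [lamc, lamc, ball_perm, Finset.card_image_of_injective _ π.injective]

lemma filter_perm (π : Equiv.Perm V) (E : Finset (V × V)) (r : V) (c : ℕ) (w : V) :
    (ball (permE π E) (π r) c).filter (fun u => (u, π w) ∈ permE π E)
      = ((ball E r c).filter (fun u => (u, w) ∈ E)).image π := by
  ext u
  simp only [Finset.mem_filter, ball_perm, Finset.mem_image]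
  constructor
  · rintro ⟨⟨u', hu', rfl⟩, hE⟩
    exact ⟨u', ⟨hu', (mem_permE π E u' w).1 hE⟩, rfl⟩
  · rintro ⟨u', ⟨hu', hE⟩, rfl⟩
    exact ⟨⟨u', hu', rfl⟩, (mem_permE π E u' w).2 hE⟩

lemma xi_perm_const (π : Equiv.Perm V) (E : Finset (V × V)) (r : V) (c : ℕ)
    {μ : V → ℝ} {μbar : ℝ} (hμ : ∀ u : V, μ u = μbar) (w : V) :
    xi (permE π E) (π r) c μ (π w) = xi E r c μ w := by
  rw [xi, xi, lamc_perm, filter_perm, ball_perm]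
  congr 1
  · congr 1
    by_cases h : w ∈ ball E r c
    · rw [if_pos h, if_pos (Finset.mem_image_of_mem π h)]
    · rw [if_neg h, if_neg]
      intro hmem
      rw [Finset.mem_image] at hmem
      obtain ⟨a, ha, hea⟩ := hmem
      exact h (π.injective hea ▸ ha)
  · rw [Finset.sum_image (fun a _ b _ h => π.injective h)]
    congr 1
    exact Finset.sum_congr rfl fun u _ => by rw [hμ, hμ]

lemma splus_perm (π : Equiv.Perm V) (E : Finset (V × V)) (r : V) (c : ℕ)
    {μ : V → ℝ} {μbar : ℝ} (hμ : ∀ u : V, μ u = μbar) :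
    ∑ w ∈ ball (permE π E) (π r) (c + 1), Real.exp (xi (permE π E) (π r) c μ w)
      = ∑ w ∈ ball E r (c + 1), Real.exp (xi E r c μ w) := by
  rw [ball_perm, Finset.sum_image (fun a _ b _ h => π.injective h)]
  exact Finset.sum_congr rfl fun w _ => by rw [xi_perm_const π E r c hμ]

lemma stot_perm (π : Equiv.Perm V) (E : Finset (V × V)) (r : V) (c : ℕ)
    {μ : V → ℝ} {μbar : ℝ} (hμ : ∀ u : V, μ u = μbar) :
    ∑ w : V, Real.exp (xi (permE π E) (π r) c μ w)
      = ∑ w : V, Real.exp (xi E r c μ w) := by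
  refine (Fintype.sum_equiv π _ _ fun w => ?_).symm
  rw [xi_perm_const π E r c hμ]

lemma xi_hasDerivAt (E' : Finset (V × V)) (r' : V) (c : ℕ) (μ : V → ℝ) (v w : V) (x₀ : ℝ) :
    HasDerivAt (fun x => xi E' r' c (Function.update μ v x) w)
      (lamc E' r' c *
        (if v ∈ (ball E' r' c).filter (fun u => (u, w) ∈ E') then 1 else 0)) x₀ := by
  have hsum : HasDerivAt
      (fun x => ∑ u ∈ (ball E' r' c).filter (fun u => (u, w) ∈ E'), Function.update μ v x u)
      (if v ∈ (ball E' r' c).filter (fun u => (u, w) ∈ E') then 1 else 0) x₀ := by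
    have h : ∀ u ∈ (ball E' r' c).filter (fun u => (u, w) ∈ E'),
        HasDerivAt (fun x => Function.update μ v x u)
          (if u = v then (1:ℝ) else 0) x₀ := by
      intro u _
      by_cases h : u = v
      · simpa [h, Function.update_apply] using (hasDerivAt_id' (x := x₀))
      · simpa [h, Function.update_apply] using (hasDerivAt_const x₀ (μ u))
    simpa [Finset.sum_ite_eq'] using HasDerivAt.fun_sum h
  have h := (hasDerivAt_const x₀
      (lamc E' r' c * (if w ∈ ball E' r' c then 1 else 0))).add (hsum.const_mul (lamc E' r' c))
  simpa [xi, Pi.add_def] using h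

lemma bfs_hasDerivAt (E' : Finset (V × V)) (r' : V) (c : ℕ) (μ : V → ℝ) (v : V) :
    HasDerivAt (fun x => bfsLoss E' r' c (Function.update μ v x))
      ((∑ w : V, Real.exp (xi E' r' c μ w) *
          (lamc E' r' c * (if v ∈ (ball E' r' c).filter (fun u => (u, w) ∈ E') then 1 else 0)))
        * ((∑ w : V, Real.exp (xi E' r' c μ w))⁻¹
            - (∑ w ∈ ball E' r' (c + 1), Real.exp (xi E' r' c μ w))⁻¹)) (μ v) := by
  set b : V → ℝ := fun w =>
    lamc E' r' c * (if v ∈ (ball E' r' c).filter (fun u => (u, w) ∈ E') then 1 else 0) with hb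
  have hxi : ∀ w (x₀ : ℝ), HasDerivAt (fun x => xi E' r' c (Function.update μ v x) w) (b w) x₀ :=
    fun w x₀ => xi_hasDerivAt E' r' c μ v w x₀
  have hupd : Function.update μ v (μ v) = μ := Function.update_eq_self v μ
  have hS : HasDerivAt (fun x => ∑ w : V, Real.exp (xi E' r' c (Function.update μ v x) w))
      (∑ w : V, Real.exp (xi E' r' c μ w) * b w) (μ v) := by
    have := HasDerivAt.fun_sum (u := Finset.univ) (fun w _ => (hxi w (μ v)).exp)
    simpa [hupd] using this
  have hSp : HasDerivAt
      (fun x => ∑ w ∈ ball E' r' (c + 1), Real.exp (xi E' r' c (Function.update μ v x) w))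
      (∑ w ∈ ball E' r' (c + 1), Real.exp (xi E' r' c μ w) * b w) (μ v) := by
    have := HasDerivAt.fun_sum (u := ball E' r' (c + 1)) (fun w _ => (hxi w (μ v)).exp)
    simpa [hupd] using this
  have hSpos : ∀ μ' : V → ℝ, (0:ℝ) < ∑ w : V, Real.exp (xi E' r' c μ' w) := fun μ' =>
    Finset.sum_pos (fun w _ => Real.exp_pos _) ⟨r', Finset.mem_univ r'⟩
  have hSppos : ∀ μ' : V → ℝ, (0:ℝ) < ∑ w ∈ ball E' r' (c + 1), Real.exp (xi E' r' c μ' w) :=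
    fun μ' => Finset.sum_pos (fun w _ => Real.exp_pos _) ⟨r', root_mem_ball E' r' (c + 1)⟩
  have hfun : (fun x => bfsLoss E' r' c (Function.update μ v x))
      = fun x => Real.log (∑ w : V, Real.exp (xi E' r' c (Function.update μ v x) w))
          - Real.log (∑ w ∈ ball E' r' (c + 1),
              Real.exp (xi E' r' c (Function.update μ v x) w)) := by
    funext x
    rw [bfsLoss, Real.log_div (hSppos _).ne' (hSpos _).ne', neg_sub]
  have hderiv := (hS.log (hSpos _).ne').sub (hSp.log (hSppos _).ne')
  rw [hupd] at hderiv
  have hsubset : (∑ w : V, Real.exp (xi E' r' c μ w) * b w)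
      = ∑ w ∈ ball E' r' (c + 1), Real.exp (xi E' r' c μ w) * b w := by
    refine (Finset.sum_subset (Finset.subset_univ _) fun w _ hw => ?_).symm
    have hbw : b w = 0 := by
      rw [hb]
      simp only [mul_eq_zero]
      right
      rw [if_neg]
      intro hv
      rw [Finset.mem_filter] at hv
      exact hw (mem_ball_succ_of_edge hv.1 hv.2)
    rw [hbw, mul_zero]
  rw [hfun]
  refine hderiv.congr_deriv ?_
  rw [← hsubset]
  ring

end Aux2
section Aux3
variable {V : Type*} [Fintype V] [DecidableEq V]

lemma count_perm (v : V) (F : Finset V) :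
    (Finset.univ.filter fun π : Equiv.Perm V => π.symm v ∈ F).card
      = F.card * Nat.factorial (Fintype.card V - 1) := by
  rw [Finset.card_eq_sum_card_fiberwise
    (f := fun π : Equiv.Perm V => π.symm v) (s := Finset.univ.filter fun π : Equiv.Perm V => π.symm v ∈ F) (t := F)
    (fun π hπ => (Finset.mem_filter.mp hπ).2)]
  rw [Finset.sum_congr rfl (fun u hu => ?_), Finset.sum_const, smul_eq_mul]
  have hset : ((Finset.univ.filter fun π : Equiv.Perm V => π.symm v ∈ F).filter
      fun π => π.symm v = u) = Finset.univ.filter fun π : Equiv.Perm V => π u = v := by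
    ext π
    simp only [Finset.mem_filter, Finset.mem_univ, true_and]
    constructor
    · rintro ⟨_, h⟩
      rw [← h, Equiv.apply_symm_apply]
    · intro h
      have : π.symm v = u := by rw [← h, Equiv.symm_apply_apply]
      exact ⟨this ▸ hu, this⟩
  rw [hset, perm_fiber_card]

end Aux3
/-- gradient of the permutation-averaged BFS loss when all coordinates
of μ are equal; the value is independent of the coordinate v. -/
theorem stmt3 {V : Type*} [Fintype V] [DecidableEq V]
    (E : Finset (V × V)) (r : V) (c : ℕ)
    (μ : V → ℝ) (μbar : ℝ) (hμ : ∀ u : V, μ u = μbar) :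
    ∀ v : V,
      HasDerivAt (fun x => avgBfsLoss E r c (Function.update μ v x))
        (-((∑ w ∈ ball E r (c + 1), Real.exp (xi E r c μ w))⁻¹
              / ((Fintype.card V : ℝ) * Real.sqrt ((ball E r c).card : ℝ)))
          * (((Fintype.card V : ℝ) - ((ball E r (c + 1)).card : ℝ))
              / ((∑ w ∈ ball E r (c + 1), Real.exp (xi E r c μ w))
                  + ((Fintype.card V : ℝ) - ((ball E r (c + 1)).card : ℝ))))
          * (∑ u : V, (degc E r c u : ℝ) * Real.exp (xi E r c μ u)))
        (μ v) := by

  intro v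
  classical
  have hroot : r ∈ ball E r c := root_mem_ball E r c
  have hn : 0 < Fintype.card V := Fintype.card_pos_iff.mpr ⟨r⟩
  -- derivative of each permuted loss
  have hderiv : ∀ π : Equiv.Perm V,
      HasDerivAt (fun x => bfsLoss (permE π E) (π r) c (Function.update μ v x))
        ((∑ w : V, Real.exp (xi E r c μ w) *
            (lamc E r c *
              (if π.symm v ∈ (ball E r c).filter (fun u => (u, w) ∈ E) then 1 else 0)))
          * ((∑ w : V, Real.exp (xi E r c μ w))⁻¹
              - (∑ w ∈ ball E r (c + 1), Real.exp (xi E r c μ w))⁻¹)) (μ v) := by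
    intro π
    have h := bfs_hasDerivAt (permE π E) (π r) c μ v
    rw [stot_perm π E r c hμ, splus_perm π E r c hμ] at h
    convert h using 2
    refine Fintype.sum_equiv π _ _ fun w => ?_
    rw [xi_perm_const π E r c hμ, lamc_perm, filter_perm]
    congr 2
    by_cases hvm : π.symm v ∈ (ball E r c).filter (fun u => (u, w) ∈ E)
    · rw [if_pos hvm, if_pos (Finset.mem_image.mpr ⟨π.symm v, hvm, by simp⟩)]
    · rw [if_neg hvm, if_neg]
      intro hmem
      obtain ⟨a, ha, hae⟩ := Finset.mem_image.mp hmem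
      exact hvm (by rwa [show π.symm v = a by rw [← hae, Equiv.symm_apply_apply]])
  have hsum := HasDerivAt.fun_sum (u := (Finset.univ : Finset (Equiv.Perm V)))
    (fun π _ => hderiv π)
  have havg := hsum.const_mul ((Nat.factorial (Fintype.card V) : ℝ))⁻¹
  simp only [avgBfsLoss]
  refine havg.congr_deriv ?_
  -- now the value identity
  have hcount : ∀ w : V, (∑ π : Equiv.Perm V,
      (if π.symm v ∈ (ball E r c).filter (fun u => (u, w) ∈ E) then (1:ℝ) else 0))
      = (degc E r c w : ℝ) * (Nat.factorial (Fintype.card V - 1) : ℝ) := by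
    intro w
    rw [Finset.sum_boole, count_perm]
    simp only [degc]
    push_cast
    ring
  have hT : (∑ π : Equiv.Perm V, ∑ w : V, Real.exp (xi E r c μ w) *
        (lamc E r c *
          (if π.symm v ∈ (ball E r c).filter (fun u => (u, w) ∈ E) then 1 else 0)))
      = (Nat.factorial (Fintype.card V - 1) : ℝ) * lamc E r c *
          ∑ u : V, (degc E r c u : ℝ) * Real.exp (xi E r c μ u) := by
    rw [Finset.sum_comm, Finset.mul_sum]
    refine Finset.sum_congr rfl fun w _ => ?_
    rw [← Finset.mul_sum, ← Finset.mul_sum, hcount w]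
    ring
  have hSsplit : (∑ w : V, Real.exp (xi E r c μ w))
      = (∑ w ∈ ball E r (c + 1), Real.exp (xi E r c μ w))
        + ((Fintype.card V : ℝ) - ((ball E r (c + 1)).card : ℝ)) := by
    rw [← Finset.sum_sdiff (Finset.subset_univ (ball E r (c + 1))), add_comm]
    congr 1
    have h1 : ∀ w ∈ Finset.univ \ ball E r (c + 1), Real.exp (xi E r c μ w) = 1 :=
      fun w hw => by
        rw [xi_zero μ (Finset.mem_sdiff.mp hw).2, Real.exp_zero]
    rw [Finset.sum_congr rfl h1, Finset.sum_const, nsmul_eq_mul, mul_one,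
      Finset.card_sdiff_of_subset (Finset.subset_univ _), Finset.card_univ,
      Nat.cast_sub (Finset.card_le_univ _)]
  rw [← Finset.sum_mul, hT]
  have hnm : (Fintype.card V : ℝ) - ((ball E r (c + 1)).card : ℝ)
      = (∑ w : V, Real.exp (xi E r c μ w))
        - (∑ w ∈ ball E r (c + 1), Real.exp (xi E r c μ w)) := by
    rw [hSsplit]; ring
  rw [hnm, lamc]
  have hfactR : (Nat.factorial (Fintype.card V) : ℝ)
      = (Fintype.card V : ℝ) * (Nat.factorial (Fintype.card V - 1) : ℝ) := by
    exact_mod_cast congrArg (Nat.cast (R := ℝ)) (Nat.mul_factorial_pred hn.ne').symm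
  rw [hfactR]
  have h1 : Real.sqrt ((ball E r c).card : ℝ) ≠ 0 :=
    (Real.sqrt_pos.mpr (by exact_mod_cast Finset.card_pos.mpr ⟨r, hroot⟩)).ne'
  have h2 : (∑ w : V, Real.exp (xi E r c μ w)) ≠ 0 :=
    (Finset.sum_pos (fun w _ => Real.exp_pos _) ⟨r, Finset.mem_univ r⟩).ne'
  have h3 : (∑ w ∈ ball E r (c + 1), Real.exp (xi E r c μ w)) ≠ 0 :=
    (Finset.sum_pos (fun w _ => Real.exp_pos _) ⟨r, root_mem_ball E r (c + 1)⟩).ne'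
  have h4 : (Fintype.card V : ℝ) ≠ 0 := by exact_mod_cast hn.ne'
  have h5 : (Nat.factorial (Fintype.card V - 1) : ℝ) ≠ 0 := by
    exact_mod_cast (Nat.factorial_pos _).ne'
  generalize (∑ w : V, Real.exp (xi E r c μ w)) = S at *
  generalize (∑ w ∈ ball E r (c + 1), Real.exp (xi E r c μ w)) = P at *
  generalize (∑ u : V, (degc E r c u : ℝ) * Real.exp (xi E r c μ u)) = D at *
  generalize Real.sqrt ((ball E r c).card : ℝ) = q at *
  generalize (Nat.factorial (Fintype.card V - 1) : ℝ) = f at *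
  generalize (Fintype.card V : ℝ) = n at *
  field_simp
  linear_combination (D * S - D * P) * (mul_inv_cancel₀ h2)
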